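/- Conjunction introduction holds in exactly the two homogeneous forms of B-entailment: ({α, β} | ∅ ⊨ ∅ | {α∧β}) and (∅ | {α, β} ⊨ {α∧β} | ∅) are valid, while for propositional variables α, β the forms (∅ | {α, β} ⊨ ∅ | {α∧β}) and ({β} | {α} ⊨ ∅ | {α∧β}) are invalid. -/
import Mathlib


/-- The four truth-values of Dunn-Belnap logic. -/
inductive Four where
  | f | bot | top | t
deriving DecidableEq, Repr

namespace Four

/-- Whether the value contains the classical value T. -/
def hasT : Four → Bool
  | t => true | top => true | _ => false

/-- Whether the value contains the classical value F. -/
def hasF : Four → Bool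
  | f => true | top => true | _ => false

/-- Build a value from its T-part and F-part. -/
def mk : Bool → Bool → Four
  | true, true => top
  | true, false => t
  | false, true => f
  | false, false => bot

/-- Logical order: x ≤_t y iff x∩{T} ⊆ y∩{T} and y∩{F} ⊆ x∩{F}. -/
def leT (x y : Four) : Prop :=
  (x.hasT = true → y.hasT = true) ∧ (y.hasF = true → x.hasF = true)

/-- Information order: x ≤_i y iff x ⊆ y. -/
def leI (x y : Four) : Prop :=
  (x.hasT = true → y.hasT = true) ∧ (x.hasF = true → y.hasF = true)

/-- Negation: swaps T and F membership. -/
def negT (x : Four) : Four := mk x.hasF x.hasT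

/-- Infimum w.r.t. the logical order. -/
def meetT (x y : Four) : Four := mk (x.hasT && y.hasT) (x.hasF || y.hasF)

/-- Supremum w.r.t. the logical order. -/
def joinT (x y : Four) : Four := mk (x.hasT || y.hasT) (x.hasF && y.hasF)

/-- Infimum w.r.t. the information order. -/
def meetI (x y : Four) : Four := mk (x.hasT && y.hasT) (x.hasF && y.hasF)

/-- Supremum w.r.t. the information order. -/
def joinI (x y : Four) : Four := mk (x.hasT || y.hasT) (x.hasF || y.hasF)

/-- Acceptance: designated set Y = {⊤, t}. -/
def acc (x : Four) : Prop := x = top ∨ x = t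

/-- Rejection: set N = {f, ⊤}. -/
def rej (x : Four) : Prop := x = f ∨ x = top

end Four

/-- Formulas of the language S: propositional variables, ¬, ∧, ∨. -/
inductive Form where
  | var : ℕ → Form
  | neg : Form → Form
  | conj : Form → Form → Form
  | disj : Form → Form → Form
deriving DecidableEq

/-- A valuation (agent) is determined by its values on variables; it is
extended homomorphically to all formulas. -/
def Form.eval (v : ℕ → Four) : Form → Four
  | var n => v n
  | neg φ => (φ.eval v).negT
  | conj φ ψ => (φ.eval v).meetT (ψ.eval v)
  | disj φ ψ => (φ.eval v).joinT (ψ.eval v)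

open Four Form

/-- Truth-preserving (Tarskian) entailment ⊨ᵗ = ⊨⁴. -/
def entT (Γ : Set Form) (α : Form) : Prop :=
  ¬ ∃ v : ℕ → Four, (∀ γ ∈ Γ, acc (γ.eval v)) ∧ ¬ acc (α.eval v)

/-- Falsity entailment ⊨ᶠ: no valuation not-rejects all premises while rejecting the conclusion. -/
def entF (Γ : Set Form) (α : Form) : Prop :=
  ¬ ∃ v : ℕ → Four, (∀ γ ∈ Γ, ¬ rej (γ.eval v)) ∧ rej (α.eval v)

/-- q-entailment: no valuation not-rejects all premises while not-accepting the conclusion. -/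
def entQ (Γ : Set Form) (α : Form) : Prop :=
  ¬ ∃ v : ℕ → Four, (∀ γ ∈ Γ, ¬ rej (γ.eval v)) ∧ ¬ acc (α.eval v)

/-- p-entailment: no valuation accepts all premises while rejecting the conclusion. -/
def entP (Γ : Set Form) (α : Form) : Prop :=
  ¬ ∃ v : ℕ → Four, (∀ γ ∈ Γ, acc (γ.eval v)) ∧ rej (α.eval v)

/-- B-entailment (Γ | Ψ ⊨ Φ | Δ): no valuation accepts all of Γ,
not-accepts all of Δ, rejects all of Φ and not-rejects all of Ψ. -/
def Bent (Γ Ψ Φ Δ : Set Form) : Prop :=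
  ¬ ∃ v : ℕ → Four,
    (∀ γ ∈ Γ, acc (γ.eval v)) ∧ (∀ δ ∈ Δ, ¬ acc (δ.eval v)) ∧
    (∀ φ ∈ Φ, rej (φ.eval v)) ∧ (∀ ψ ∈ Ψ, ¬ rej (ψ.eval v))

instance : DecidablePred Four.acc := fun x => by unfold Four.acc; infer_instance
instance : DecidablePred Four.rej := fun x => by unfold Four.rej; infer_instance

/-- conjunction introduction holds in exactly the two
homogeneous forms of B-entailment, and fails in the mixed forms. -/
theorem conj_intro_forms :
    (∀ α β : Form,
      Bent {α, β} ∅ ∅ {Form.conj α β} ∧ Bent ∅ {α, β} {Form.conj α β} ∅) ∧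
    (∀ n m : ℕ, n ≠ m →
      ¬ Bent ∅ {Form.var n, Form.var m} ∅ {Form.conj (Form.var n) (Form.var m)} ∧
      ¬ Bent {Form.var m} {Form.var n} ∅ {Form.conj (Form.var n) (Form.var m)}) := by
  constructor
  · intro α β
    have hacc : ∀ x y : Four, acc x → acc y → acc (x.meetT y) := by intro x y; cases x <;> cases y <;> decide
    have hrej : ∀ x y : Four, ¬ rej x → ¬ rej y → ¬ rej (x.meetT y) := by intro x y; cases x <;> cases y <;> decide
    constructor
    · rintro ⟨v, hΓ, hΔ, -, -⟩
      exact hΔ _ rfl (hacc _ _ (hΓ α (Or.inl rfl)) (hΓ β (Or.inr rfl)))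
    · rintro ⟨v, -, -, hΦ, hΨ⟩
      exact hrej _ _ (hΨ α (Or.inl rfl)) (hΨ β (Or.inr rfl)) (hΦ _ rfl)
  · intro n m hnm
    constructor
    · intro h
      apply h
      refine ⟨fun _ => Four.bot, by simp, ?_, by simp, ?_⟩
      · rintro δ rfl; simp only [Form.eval]; decide
      · rintro ψ (rfl | rfl) <;> simp only [Form.eval] <;> decide
    · intro h
      apply h
      refine ⟨fun k => if k = m then Four.t else Four.bot, ?_, ?_, by simp, ?_⟩
      · rintro γ rfl; simp [Form.eval]; decide
      · rintro δ rfl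
        simp only [Form.eval, eval, if_neg hnm, if_pos rfl]
        decide
      · rintro ψ rfl
        simp only [Form.eval, eval, if_neg hnm]
        decide
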